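/- arXiv:2104.13213 — 2 statements merged into one kernel-verified Lean document; each statement's English description precedes it below -/
import Mathlib

section
/- Let C be a Weyl chamber, let μ ∈ Λ be a translation with μ(A₀) ⊂ C, and let w ∈ W̃ with w(A₀) ⊂ C. Then l(μw) = l(μ) + l(w). -/
open scoped Classical

noncomputable section

/-- A (reduced, crystallographic) root system `Φ` in the dual of a real vector space `V`,
together with a chosen coroot `α̌ ∈ V` for every root `α`. -/
structure RootSystemData (V : Type*) [AddCommGroup V] [Module ℝ V] where
  roots : Set (Module.Dual ℝ V)
  coroot : Module.Dual ℝ V → V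
  finite : roots.Finite
  ne_zero : ∀ α ∈ roots, α ≠ 0
  root_coroot_two : ∀ α ∈ roots, α (coroot α) = 2
  reflect_mem : ∀ α ∈ roots, ∀ β ∈ roots, β - β (coroot α) • α ∈ roots
  crystallographic : ∀ α ∈ roots, ∀ β ∈ roots, ∃ n : ℤ, β (coroot α) = (n : ℝ)
  reduced : ∀ α ∈ roots, ∀ c : ℝ, c • α ∈ roots → c = 1 ∨ c = -1
  span_top : Submodule.span ℝ roots = ⊤

section
variable {V : Type*} [AddCommGroup V] [Module ℝ V]

/-- The simple elements of a positive system `P`: elements which are not sums of two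
elements of `P`. -/
def simplesOf (P : Set (Module.Dual ℝ V)) : Set (Module.Dual ℝ V) :=
  {α | α ∈ P ∧ ¬∃ β ∈ P, ∃ γ ∈ P, α = β + γ}

/-- The affine root `(α, n)` viewed as the affine function `x ↦ α(x) + n`. -/
def aev (α : Module.Dual ℝ V) (n : ℤ) : V → ℝ := fun x => α x + (n : ℝ)

/-- `π : W̃ → Λ`, `w ↦ w(0)`. -/
def piL (w : Equiv.Perm V) : V := w 0

/-- Translation by `μ`, as an element of the group of permutations of `V`. -/
def transl (μ : V) : Equiv.Perm V := Equiv.addLeft μ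

end

namespace RootSystemData

variable {V : Type*} [AddCommGroup V] [Module ℝ V]

variable (RS : RootSystemData V)

/-- A point is regular if it lies on no root hyperplane. -/
def IsRegularPt (x : V) : Prop := ∀ α ∈ RS.roots, α x ≠ 0

/-- Weyl chambers of `Φ`: connected components of the set of regular points,
described by the strict sign pattern of a regular point. -/
def IsChamber (C : Set V) : Prop :=
  ∃ v, RS.IsRegularPt v ∧ C = {x | ∀ α ∈ RS.roots, 0 < α v → 0 < α x}

/-- The type `𝒞` of Weyl chambers. -/
abbrev ChamberT := {C : Set V // RS.IsChamber C}

/-- The set `Φ_C` of `C`-positive roots. -/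
def pos (C : Set V) : Set (Module.Dual ℝ V) := {α | α ∈ RS.roots ∧ ∀ x ∈ C, 0 < α x}


/-- The set `Δ_C` of `C`-simple roots. -/
def simples (C : Set V) : Set (Module.Dual ℝ V) := simplesOf (RS.pos C)

/-- The affine reflection `s_{(α,n)} : x ↦ x − (α(x)+n) • α̌`. -/
def sAff (α : Module.Dual ℝ V) (n : ℤ) : Equiv.Perm V :=
  if h : α (RS.coroot α) = 2 then
    Function.Involutive.toPerm (fun x => x - (α x + (n : ℝ)) • RS.coroot α) (by
      intro x
      simp only [map_sub, map_smul, smul_eq_mul, h]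
      match_scalars <;> ring)
  else Equiv.refl V


/-- Positivity of an affine function `f` (which is required to be an affine root
`(α,n)`), relative to a positive system `P ⊂ Φ`:  `n > 0`, or `n = 0 ∧ α ∈ P`. -/
def IsPosAff (P : Set (Module.Dual ℝ V)) (f : V → ℝ) : Prop :=
  ∃ α ∈ RS.roots, ∃ n : ℤ, f = aev α n ∧ (0 < n ∨ (n = 0 ∧ α ∈ P))

/-- The subgroup of the affine Weyl group generated by the reflections `s_{(α,n)}`
with `α ∈ Φ ∩ Φ'`. -/
def affWeylOf (Φ' : Set (Module.Dual ℝ V)) : Subgroup (Equiv.Perm V) :=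
  Subgroup.closure {g | ∃ α ∈ RS.roots ∩ Φ', ∃ n : ℤ, g = RS.sAff α n}

/-- The affine Weyl group `W̃ = W ⋉ Λ`, realized as the group generated by all affine
reflections `s_{(α,n)}`. -/
def affWeyl : Subgroup (Equiv.Perm V) := RS.affWeylOf Set.univ

/-- The finite Weyl group `W`, generated by the linear reflections `s_α = s_{(α,0)}`. -/
def weyl : Subgroup (Equiv.Perm V) :=
  Subgroup.closure {g | ∃ α ∈ RS.roots, g = RS.sAff α 0}

/-- The subgroup `W̃_α` generated by the reflections `s_{(α,n)}`, `n ∈ ℤ`. -/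
def reflSubgroup (α : Module.Dual ℝ V) : Subgroup (Equiv.Perm V) :=
  Subgroup.closure {g | ∃ n : ℤ, g = RS.sAff α n}


/-- The coroot lattice `Λ ⊂ V`. -/
def corootLattice : AddSubgroup V := AddSubgroup.closure (RS.coroot '' RS.roots)


/-- The (open) fundamental alcove `A₀ ⊂ C₀`, whose closure contains `0`. -/
def alcove (C₀ : Set V) : Set V := {x | ∀ α ∈ RS.pos C₀, 0 < α x ∧ α x < 1}

/-- `w ∈ C`, i.e. `w(A₀) ⊂ C`. -/
def MemC (C₀ : Set V) (w : Equiv.Perm V) (C : Set V) : Prop :=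
  ∀ x ∈ RS.alcove C₀, w x ∈ C

/-- The inversion set of `w`: positive affine roots `f` with `w⁻¹(f) = f ∘ w`
negative. -/
def invSet (P : Set (Module.Dual ℝ V)) (w : Equiv.Perm V) : Set (V → ℝ) :=
  {f | RS.IsPosAff P f ∧ ¬ RS.IsPosAff P (fun x => f (w x))}

/-- The length function `l` on `W̃` determined by the fundamental alcove:
the number of inversions. -/
def len (C₀ : Set V) (w : Equiv.Perm V) : ℕ := (RS.invSet (RS.pos C₀) w).ncard

/-- The (strict) Bruhat order on `W̃`: the transitive closure of
`x < s_{(α,n)} x` whenever the length increases. -/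
def bruhatLT (C₀ : Set V) : Equiv.Perm V → Equiv.Perm V → Prop :=
  Relation.TransGen (fun x y =>
    (∃ α ∈ RS.roots, ∃ n : ℤ, y = RS.sAff α n * x) ∧ RS.len C₀ x < RS.len C₀ y)

/-- The Bruhat order `≤` on `W̃`. -/
def bruhatLE (C₀ : Set V) (x y : Equiv.Perm V) : Prop := x = y ∨ RS.bruhatLT C₀ x y

/-- One step of the ordering `<_{Φ'}`:  `x = s_{(α,n)} y <_{(α,n)} y` with `α ∈ Φ'`,
i.e. `y⁻¹((α,n)) > 0` (positivity of affine roots relative to `P`). -/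
def stepRel (P Φ' : Set (Module.Dual ℝ V)) (x y : Equiv.Perm V) : Prop :=
  ∃ α ∈ RS.roots ∩ Φ', ∃ n : ℤ,
    x = RS.sAff α n * y ∧ RS.IsPosAff P (fun v => aev α n (y v))

/-- The ordering `<_{Φ'}` on `W̃` (with affine-root positivity relative to `P`). -/
def ordLT (P Φ' : Set (Module.Dual ℝ V)) : Equiv.Perm V → Equiv.Perm V → Prop :=
  Relation.TransGen (RS.stepRel P Φ')

/-- The ordering `≤_{Φ'}` on `W̃`. -/
def ordLE (P Φ' : Set (Module.Dual ℝ V)) (x y : Equiv.Perm V) : Prop :=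
  x = y ∨ RS.ordLT P Φ' x y

/-- The ordering `<_{Φ'}` on `V`: `x <_{Φ'} y` iff `y − x` is a positive linear
combination of coroots `α̌` with `α ∈ Φ'`. -/
def vecLT (Φ' : Set (Module.Dual ℝ V)) (x y : V) : Prop :=
  ∃ s : Finset (Module.Dual ℝ V), ∃ c : Module.Dual ℝ V → ℝ,
    s.Nonempty ∧ (∀ α ∈ s, α ∈ RS.roots ∩ Φ' ∧ 0 < c α) ∧
      y - x = ∑ α ∈ s, c α • RS.coroot α

/-- The ordering `≤_{Φ'}` on `V`. -/
def vecLE (Φ' : Set (Module.Dual ℝ V)) (x y : V) : Prop := x = y ∨ RS.vecLT Φ' x y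

/-- `ψ` is the fundamental weight of the chamber `C` corresponding to the simple root
`α ∈ Δ_C`:  `⟨ψ, β̌⟩ = δ_{αβ}` for `β ∈ Δ_C`. -/
def PairsIn (C : Set V) (ψ α : Module.Dual ℝ V) : Prop :=
  α ∈ RS.simples C ∧ ∀ β ∈ RS.simples C, ψ (RS.coroot β) = if β = α then 1 else 0

/-- `ψv` is the fundamental coweight of the chamber `C` corresponding to the simple
root `α ∈ Δ_C`:  `⟨β, ψv⟩ = δ_{αβ}` for `β ∈ Δ_C`. -/
def CoPairsIn (C : Set V) (α : Module.Dual ℝ V) (ψv : V) : Prop :=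
  α ∈ RS.simples C ∧ ∀ β ∈ RS.simples C, β ψv = if β = α then 1 else 0

/-- `ψ ∈ Ψ_C` with corresponding fundamental coweight `ψ̌ = ψv`. -/
def IsFundPair (C : Set V) (ψ : Module.Dual ℝ V) (ψv : V) : Prop :=
  ∃ α, RS.PairsIn C ψ α ∧ RS.CoPairsIn C α ψv

/-- `ψ ∈ Ψ_C`. -/
def IsFundWeightOf (C : Set V) (ψ : Module.Dual ℝ V) : Prop := ∃ α, RS.PairsIn C ψ α

/-- `Φ(ψ) = {α ∈ Φ : ⟨α, ψ̌⟩ ≥ 0}` (described via the coweight `ψv = ψ̌`). -/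
def phiNonneg (ψv : V) : Set (Module.Dual ℝ V) := {α | α ∈ RS.roots ∧ 0 ≤ α ψv}

/-- `Φ^ψ = {α ∈ Φ : ⟨α, ψ̌⟩ = 0}` (described via the coweight `ψv = ψ̌`). -/
def phiZero (ψv : V) : Set (Module.Dual ℝ V) := {α | α ∈ RS.roots ∧ α ψv = 0}

/-- The set `W̃_ψ` of `w ∈ W̃` with `w⁻¹(Φ̃^ψ_{>0}) ⊂ Φ̃_{>0}`; here `Φψ = Φ^ψ`,
`P` is the chosen positive system of `Φ^ψ` and `C₀` determines `Φ̃_{>0}`. -/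
def WpsiSet (C₀ : Set V) (Φψ P : Set (Module.Dual ℝ V)) : Set (Equiv.Perm V) :=
  {w | ∀ α ∈ RS.roots ∩ Φψ, ∀ n : ℤ, (0 < n ∨ (n = 0 ∧ α ∈ P)) →
      RS.IsPosAff (RS.pos C₀) (fun v => aev α n (w v))}

/-- Admissibility of a tuple `w̄ ∈ W̃^𝒞`: `w_{s_α(C)} ≤_α w_C` for all `C ∈ 𝒞`,
`α ∈ Δ_C`. -/
def AdmissibleW (C₀ : Set V) (w : RS.ChamberT → Equiv.Perm V) : Prop :=
  ∀ C : RS.ChamberT, ∀ α ∈ RS.simples C.1, ∀ C' : RS.ChamberT,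
    C'.1 = ⇑(RS.sAff α 0) '' C.1 → RS.ordLE (RS.pos C₀) {α} (w C') (w C)

/-- Quasi-admissibility of a tuple `w̄ ∈ W̃^𝒞`: `w_{s_α(C)} ∈ W̃_α w_C`. -/
def QuasiAdmissibleW (w : RS.ChamberT → Equiv.Perm V) : Prop :=
  ∀ C : RS.ChamberT, ∀ α ∈ RS.simples C.1, ∀ C' : RS.ChamberT,
    C'.1 = ⇑(RS.sAff α 0) '' C.1 → ∃ u ∈ RS.reflSubgroup α, w C' = u * w C

/-- Admissibility of a tuple `μ̄ ∈ V^𝒞`: `μ_C − μ_{s_α(C)} ∈ ℝ_{≥0} α̌`. -/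
def AdmissibleV (μ : RS.ChamberT → V) : Prop :=
  ∀ C : RS.ChamberT, ∀ α ∈ RS.simples C.1, ∀ C' : RS.ChamberT,
    C'.1 = ⇑(RS.sAff α 0) '' C.1 → ∃ c : ℝ, 0 ≤ c ∧ μ C - μ C' = c • RS.coroot α

/-- Quasi-admissibility of a tuple `μ̄ ∈ V^𝒞`: `μ_C − μ_{s_α(C)} ∈ ℝ α̌`. -/
def QuasiAdmissibleV (μ : RS.ChamberT → V) : Prop :=
  ∀ C : RS.ChamberT, ∀ α ∈ RS.simples C.1, ∀ C' : RS.ChamberT,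
    C'.1 = ⇑(RS.sAff α 0) '' C.1 → ∃ c : ℝ, μ C - μ C' = c • RS.coroot α

/-- `m`-regularity of a tuple `μ̄ ∈ V^𝒞`: `⟨α, μ_C⟩ ≥ m` for every `C ∈ 𝒞` and
`α ∈ Φ_C`. -/
def RegularVAt (m : ℝ) (μ : RS.ChamberT → V) : Prop :=
  ∀ C : RS.ChamberT, ∀ α ∈ RS.pos C.1, m ≤ α (μ C)

/-- `m`-regularity of a tuple `w̄ ∈ W̃^𝒞`. -/
def RegularWAt (m : ℝ) (w : RS.ChamberT → Equiv.Perm V) : Prop :=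
  RS.RegularVAt m (fun C => piL (w C))

/-- Regularity of a tuple `μ̄ ∈ V^𝒞`. -/
def RegularV (μ : RS.ChamberT → V) : Prop := ∃ m : ℝ, 0 < m ∧ RS.RegularVAt m μ

/-- Regularity of a tuple `w̄ ∈ W̃^𝒞`. -/
def RegularW (w : RS.ChamberT → Equiv.Perm V) : Prop := ∃ m : ℝ, 0 < m ∧ RS.RegularWAt m w

/-- `e` is the quasi-admissible tuple `ē_ψ` corresponding to the standard basis vector
`e_ψ ∈ ℤ^Ψ`:  `(ē_ψ)_C = α̌` if `α ∈ Δ_C` corresponds to `ψ ∈ Ψ_C`, and `= 0` if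
`ψ ∉ Ψ_C`. -/
def IsEPsiTuple (ψ : Module.Dual ℝ V) (e : RS.ChamberT → V) : Prop :=
  ∀ C : RS.ChamberT,
    (∀ α, RS.PairsIn C.1 ψ α → e C = RS.coroot α) ∧
      ((¬∃ α, RS.PairsIn C.1 ψ α) → e C = 0)

end RootSystemData

section StmtTwoAux

variable {V : Type*} [AddCommGroup V] [Module ℝ V]

lemma RSaux_aev_inj {β β' : Module.Dual ℝ V} {m m' : ℤ}
    (h : aev β m = aev β' m') : β = β' ∧ m = m' := by
  have h0 : β 0 + (m : ℝ) = β' 0 + (m' : ℝ) := congrFun h 0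
  simp only [map_zero, zero_add] at h0
  have hm : m = m' := by exact_mod_cast h0
  subst hm
  refine ⟨?_, rfl⟩
  ext x
  have hx : β x + (m : ℝ) = β' x + (m : ℝ) := congrFun h x
  linarith

namespace RootSystemData

variable (RS : RootSystemData V)

lemma neg_mem' {β : Module.Dual ℝ V} (hβ : β ∈ RS.roots) : -β ∈ RS.roots := by
  have h := RS.reflect_mem β hβ β hβ
  rw [RS.root_coroot_two β hβ] at h
  have e : β - (2 : ℝ) • β = -β := by module
  rwa [e] at h

lemma int_pt {μ : V} (hμ : μ ∈ RS.corootLattice) :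
    ∀ β ∈ RS.roots, ∃ k : ℤ, β μ = (k : ℝ) := by
  intro β hβ
  let S : AddSubgroup V :=
    { carrier := {x | ∃ k : ℤ, β x = (k : ℝ)}
      zero_mem' := ⟨0, by simp⟩
      add_mem' := by
        rintro x y ⟨k, hk⟩ ⟨l, hl⟩
        exact ⟨k + l, by rw [map_add, hk, hl]; push_cast; ring⟩
      neg_mem' := by
        rintro x ⟨k, hk⟩
        exact ⟨-k, by rw [map_neg, hk]; push_cast; ring⟩ }
  have hle : RS.corootLattice ≤ S := by
    rw [RootSystemData.corootLattice, AddSubgroup.closure_le]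
    rintro _ ⟨α, hα, rfl⟩
    exact RS.crystallographic α hα β hβ
  exact hle hμ

lemma sAff_apply {α : Module.Dual ℝ V} (hα : α ∈ RS.roots) (n : ℤ) (x : V) :
    RS.sAff α n x = x - (α x + (n : ℝ)) • RS.coroot α := by
  rw [RootSystemData.sAff, dif_pos (RS.root_coroot_two α hα)]
  rfl

lemma sAff_inv (α : Module.Dual ℝ V) (n : ℤ) : (RS.sAff α n)⁻¹ = RS.sAff α n := by
  by_cases h : α (RS.coroot α) = 2
  · rw [RootSystemData.sAff, dif_pos h, Equiv.Perm.inv_def]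
    ext x; rfl
  · rw [RootSystemData.sAff, dif_neg h]
    rfl

/-- `w` is an affine transformation whose linear part permutes the roots and whose
translation part pairs integrally with the roots. -/
def GoodAff (w : Equiv.Perm V) : Prop :=
  ∃ u : V →ₗ[ℝ] V, (∀ x, w x = u x + w 0) ∧
    (∀ β ∈ RS.roots, β ∘ₗ u ∈ RS.roots) ∧
    (∀ β ∈ RS.roots, ∃ k : ℤ, β (w 0) = (k : ℝ))

lemma goodAff_one : RS.GoodAff 1 := by
  refine ⟨LinearMap.id, ?_, ?_, ?_⟩
  · intro x; simp
  · intro β hβ; simpa using hβ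
  · intro β hβ; exact ⟨0, by simp⟩

lemma goodAff_mul {w₁ w₂ : Equiv.Perm V} (h₁ : RS.GoodAff w₁) (h₂ : RS.GoodAff w₂) :
    RS.GoodAff (w₁ * w₂) := by
  obtain ⟨u₁, ha₁, hb₁, hc₁⟩ := h₁
  obtain ⟨u₂, ha₂, hb₂, hc₂⟩ := h₂
  refine ⟨u₁ ∘ₗ u₂, ?_, ?_, ?_⟩
  · intro x
    have h0 : (w₁ * w₂) 0 = u₁ (w₂ 0) + w₁ 0 := by
      rw [Equiv.Perm.mul_apply, ha₁ (w₂ 0)]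
    rw [Equiv.Perm.mul_apply, ha₁ (w₂ x), ha₂ x, h0, map_add]
    simp only [LinearMap.comp_apply]
    abel
  · intro β hβ
    have h := hb₂ _ (hb₁ β hβ)
    have e : (β ∘ₗ u₁) ∘ₗ u₂ = β ∘ₗ (u₁ ∘ₗ u₂) := rfl
    rwa [e] at h
  · intro β hβ
    obtain ⟨k₁, hk₁⟩ := hc₁ β hβ
    obtain ⟨k₂, hk₂⟩ := hc₂ _ (hb₁ β hβ)
    refine ⟨k₂ + k₁, ?_⟩
    rw [Equiv.Perm.mul_apply, ha₁ (w₂ 0), map_add, hk₁]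
    have e : β (u₁ (w₂ 0)) = (β ∘ₗ u₁) (w₂ 0) := rfl
    rw [e, hk₂]
    push_cast; ring

lemma goodAff_sAff {α : Module.Dual ℝ V} (hα : α ∈ RS.roots) (n : ℤ) :
    RS.GoodAff (RS.sAff α n) := by
  refine ⟨LinearMap.id - α.smulRight (RS.coroot α), ?_, ?_, ?_⟩
  · intro x
    rw [RS.sAff_apply hα, RS.sAff_apply hα]
    simp only [LinearMap.sub_apply, LinearMap.id_apply, LinearMap.smulRight_apply,
      map_zero, zero_add, zero_sub]
    module
  · intro β hβ
    have e : β ∘ₗ (LinearMap.id - α.smulRight (RS.coroot α))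
        = β - β (RS.coroot α) • α := by
      ext x
      simp only [LinearMap.comp_apply, LinearMap.sub_apply, LinearMap.id_apply,
        LinearMap.smulRight_apply, map_sub, map_smul, smul_eq_mul, LinearMap.smul_apply]
      ring
    rw [e]
    exact RS.reflect_mem α hα β hβ
  · intro β hβ
    obtain ⟨c, hc⟩ := RS.crystallographic α hα β hβ
    refine ⟨-n * c, ?_⟩
    rw [RS.sAff_apply hα]
    simp only [map_zero, zero_add, zero_sub, map_neg, map_smul, smul_eq_mul, hc]
    push_cast; ring

lemma goodAff_of_mem {w : Equiv.Perm V} (hw : w ∈ RS.affWeyl) : RS.GoodAff w := by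
  have hw' : w ∈ Subgroup.closure
      {g : Equiv.Perm V | ∃ α ∈ RS.roots ∩ Set.univ, ∃ n : ℤ, g = RS.sAff α n} := hw
  have main : RS.GoodAff w ∧ RS.GoodAff w⁻¹ := by
    refine Subgroup.closure_induction
      (p := fun x _ => RS.GoodAff x ∧ RS.GoodAff x⁻¹) ?_ ?_ ?_ ?_ hw'
    · rintro x ⟨α, ⟨hα, -⟩, n, rfl⟩
      exact ⟨RS.goodAff_sAff hα n, by rw [RS.sAff_inv]; exact RS.goodAff_sAff hα n⟩
    · exact ⟨RS.goodAff_one, by simpa using RS.goodAff_one⟩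
    · rintro x y hx hy ⟨hx1, hx2⟩ ⟨hy1, hy2⟩
      exact ⟨RS.goodAff_mul hx1 hy1, by rw [mul_inv_rev]; exact RS.goodAff_mul hy2 hx2⟩
    · rintro x hx ⟨h1, h2⟩
      exact ⟨h2, by rwa [inv_inv]⟩
  exact main.1

lemma goodAff_transl {μ : V} (hμ : μ ∈ RS.corootLattice) : RS.GoodAff (transl μ) := by
  refine ⟨LinearMap.id, ?_, ?_, ?_⟩
  · intro x
    simp [transl, add_comm]
  · intro β hβ; simpa using hβ
  · intro β hβ
    obtain ⟨k, hk⟩ := RS.int_pt hμ β hβ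
    exact ⟨k, by simpa [transl] using hk⟩

lemma exists_alcove_pt {C₀ : Set V} (hC₀ : RS.IsChamber C₀) :
    ∃ a, a ∈ RS.alcove C₀ := by
  obtain ⟨v, hreg, hEq⟩ := hC₀
  have hvC : v ∈ C₀ := by rw [hEq]; intro α hα h; exact h
  obtain ⟨b, hb⟩ := (RS.finite.image (fun α => α v)).bddAbove
  have hM1 : (1 : ℝ) ≤ max b 1 := le_max_right _ _
  have h2M : (0 : ℝ) < 2 * max b 1 := by linarith
  refine ⟨(2 * max b 1)⁻¹ • v, ?_⟩
  rintro α ⟨hαr, hαpos⟩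
  have hv : 0 < α v := hαpos v hvC
  have hle : α v ≤ b := hb (Set.mem_image_of_mem _ hαr)
  have hlt : α v < 2 * max b 1 := by
    have := le_max_left b 1
    linarith
  rw [map_smul, smul_eq_mul]
  constructor
  · exact mul_pos (inv_pos.mpr h2M) hv
  · calc (2 * max b 1)⁻¹ * α v < (2 * max b 1)⁻¹ * (2 * max b 1) :=
        mul_lt_mul_of_pos_left hlt (inv_pos.mpr h2M)
    _ = 1 := inv_mul_cancel₀ (ne_of_gt h2M)

lemma alcove_root_cases {C₀ : Set V} (hC₀ : RS.IsChamber C₀) {β : Module.Dual ℝ V}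
    (hβ : β ∈ RS.roots) {a : V} (ha : a ∈ RS.alcove C₀) :
    (β ∈ RS.pos C₀ ∧ 0 < β a ∧ β a < 1) ∨
      (β ∉ RS.pos C₀ ∧ -1 < β a ∧ β a < 0) := by
  obtain ⟨v, hreg, hEq⟩ := hC₀
  have hvC : v ∈ C₀ := by rw [hEq]; intro α hα h; exact h
  have hposiff : ∀ γ ∈ RS.roots, 0 < γ v → γ ∈ RS.pos C₀ := by
    intro γ hγ hγv
    exact ⟨hγ, fun x hx => by rw [hEq] at hx; exact hx γ hγ hγv⟩
  rcases lt_trichotomy (β v) 0 with hlt | heq | hgt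
  · right
    have hneg : -β ∈ RS.pos C₀ :=
      hposiff _ (RS.neg_mem' hβ) (by simpa using hlt)
    have hb := ha _ hneg
    simp only [LinearMap.neg_apply] at hb
    refine ⟨?_, by linarith [hb.2], by linarith [hb.1]⟩
    intro hpos
    have := hpos.2 v hvC
    linarith
  · exact absurd heq (hreg β hβ)
  · left
    have hpos := hposiff β hβ hgt
    exact ⟨hpos, (ha β hpos).1, (ha β hpos).2⟩

lemma pos_iff_pt {C₀ : Set V} (hC₀ : RS.IsChamber C₀) {β : Module.Dual ℝ V}
    (hβ : β ∈ RS.roots) {a : V} (ha : a ∈ RS.alcove C₀) (M : ℤ) :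
    ((0 < M ∨ (M = 0 ∧ β ∈ RS.pos C₀)) ↔ 0 < β a + (M : ℝ)) ∧ β a + (M : ℝ) ≠ 0 := by
  rcases RS.alcove_root_cases hC₀ hβ ha with ⟨hPos, h0, h1⟩ | ⟨hnPos, h0, h1⟩
  · refine ⟨⟨?_, ?_⟩, ?_⟩
    · rintro (hM | ⟨rfl, -⟩)
      · have : (1 : ℝ) ≤ (M : ℝ) := by exact_mod_cast hM
        linarith
      · simpa using h0
    · intro h
      have hge : (0 : ℤ) ≤ M := by
        by_contra hc
        have h' : M ≤ -1 := by omega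
        have : (M : ℝ) ≤ -1 := by exact_mod_cast h'
        linarith
      rcases hge.lt_or_eq with h' | h'
      · exact Or.inl h'
      · exact Or.inr ⟨h'.symm, hPos⟩
    · intro hc
      rcases le_or_gt 0 M with h' | h'
      · have : (0 : ℝ) ≤ (M : ℝ) := by exact_mod_cast h'
        linarith
      · have h'' : M ≤ -1 := by omega
        have : (M : ℝ) ≤ -1 := by exact_mod_cast h''
        linarith
  · refine ⟨⟨?_, ?_⟩, ?_⟩
    · rintro (hM | ⟨rfl, hmem⟩)
      · have : (1 : ℝ) ≤ (M : ℝ) := by exact_mod_cast hM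
        linarith
      · exact absurd hmem hnPos
    · intro h
      left
      have : (0 : ℝ) < (M : ℝ) := by linarith
      exact_mod_cast this
    · intro hc
      rcases le_or_gt M 0 with h' | h'
      · have : (M : ℝ) ≤ 0 := by exact_mod_cast h'
        linarith
      · have h'' : (1 : ℤ) ≤ M := by omega
        have : (1 : ℝ) ≤ (M : ℝ) := by exact_mod_cast h''
        linarith

lemma isPosAff_iff_pt {C₀ : Set V} (hC₀ : RS.IsChamber C₀) {β : Module.Dual ℝ V}
    (hβ : β ∈ RS.roots) {a : V} (ha : a ∈ RS.alcove C₀) (M : ℤ) :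
    RS.IsPosAff (RS.pos C₀) (aev β M) ↔ 0 < β a + (M : ℝ) := by
  constructor
  · rintro ⟨β', hβ', M', hEq, hcond⟩
    obtain ⟨h1, h2⟩ := RSaux_aev_inj hEq
    subst h1; subst h2
    exact ((RS.pos_iff_pt hC₀ hβ ha M).1).mp hcond
  · intro h
    exact ⟨β, hβ, M, rfl, ((RS.pos_iff_pt hC₀ hβ ha M).1).mpr h⟩

lemma not_isPosAff_of_neg_pt {C₀ : Set V} (hC₀ : RS.IsChamber C₀) {a : V}
    (ha : a ∈ RS.alcove C₀) {f : V → ℝ} (hf : f a < 0) :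
    ¬ RS.IsPosAff (RS.pos C₀) f := by
  rintro ⟨β, hβ, M, rfl, hcond⟩
  have h := ((RS.pos_iff_pt hC₀ hβ ha M).1).mp hcond
  have : aev β M a = β a + (M : ℝ) := rfl
  rw [this] at hf
  linarith

lemma neg_on_chamber {C : Set V} (hC : RS.IsChamber C) {β : Module.Dual ℝ V}
    (hβ : β ∈ RS.roots) {z : V} (hz : z ∈ C) (hneg : β z < 0) :
    ∀ y ∈ C, β y < 0 := by
  obtain ⟨v, hreg, hEq⟩ := hC
  intro y hy
  rcases lt_trichotomy (β v) 0 with h | h | h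
  · have h' : 0 < (-β) y := by
      rw [hEq] at hy
      exact hy (-β) (RS.neg_mem' hβ) (by simpa using h)
    simpa using h'
  · exact absurd h (hreg β hβ)
  · have h' : 0 < β z := by rw [hEq] at hz; exact hz β hβ h
    linarith

lemma finite_invSet {C₀ : Set V} {w : Equiv.Perm V} (hw : RS.GoodAff w) :
    (RS.invSet (RS.pos C₀) w).Finite := by
  obtain ⟨u, hu1, hu2, hu3⟩ := hw
  apply Set.Finite.subset (Set.Finite.biUnion RS.finite
    (fun β _ => (Set.finite_Icc (0 : ℤ) ⌊-(β (w 0))⌋).image (fun m => aev β m)))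
  rintro f ⟨⟨β, hβ, m, rfl, hcond⟩, hneg⟩
  refine Set.mem_biUnion hβ ⟨m, ?_, rfl⟩
  have hm0 : 0 ≤ m := by rcases hcond with h | ⟨rfl, -⟩ <;> omega
  obtain ⟨k, hk⟩ := hu3 β hβ
  have hEq : (fun x => aev β m (w x)) = aev (β ∘ₗ u) (m + k) := by
    funext x
    show β (w x) + (m : ℝ) = (β ∘ₗ u) x + ((m + k : ℤ) : ℝ)
    rw [hu1 x, map_add, hk]
    simp only [LinearMap.comp_apply]
    push_cast; ring
  rw [hEq] at hneg
  have hmk : m + k ≤ 0 := by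
    by_contra h
    exact hneg ⟨β ∘ₗ u, hu2 β hβ, m + k, rfl, Or.inl (by omega)⟩
  have hfl : ⌊-(β (w 0))⌋ = -k := by
    rw [hk, ← Int.cast_neg, Int.floor_intCast]
  rw [Set.mem_Icc, hfl]
  omega

end RootSystemData

end StmtTwoAux

/-- Lemma 1.5(c): for a Weyl chamber `C`, a translation `μ ∈ Λ` with
`μ(A₀) ⊂ C` and `w ∈ W̃` with `w(A₀) ⊂ C`, one has `l(μw) = l(μ) + l(w)`. -/
theorem stmt2 {V : Type*} [AddCommGroup V] [Module ℝ V] [FiniteDimensional ℝ V]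
    (RS : RootSystemData V) (C₀ : Set V) (hC₀ : RS.IsChamber C₀)
    (C : Set V) (hC : RS.IsChamber C)
    (μ : V) (hμ : μ ∈ RS.corootLattice) (hμC : RS.MemC C₀ (transl μ) C)
    (w : Equiv.Perm V) (hwW : w ∈ RS.affWeyl) (hwC : RS.MemC C₀ w C) :
    RS.len C₀ (transl μ * w) = RS.len C₀ (transl μ) + RS.len C₀ w := by
  classical
  obtain ⟨a, ha⟩ := RS.exists_alcove_pt hC₀
  have hwa : w a ∈ C := hwC a ha
  have hμa : μ + a ∈ C := by
    have := hμC a ha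
    simpa [transl] using this
  have hint : ∀ β ∈ RS.roots, ∃ k : ℤ, β μ = (k : ℝ) := RS.int_pt hμ
  have hgoodw := RS.goodAff_of_mem hwW
  have hfinw : (RS.invSet (RS.pos C₀) w).Finite := RS.finite_invSet hgoodw
  have hfinT : (RS.invSet (RS.pos C₀) (transl μ)).Finite :=
    RS.finite_invSet (RS.goodAff_transl hμ)
  -- function rewriting helpers
  have htr : ∀ g : V → ℝ, (fun x => g (transl μ x)) = fun x => g (μ + x) := by
    intro g; funext x; simp [transl]
  have hTw : ∀ g : V → ℝ, (fun x => g ((transl μ * w) x)) = fun x => g (μ + w x) := by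
    intro g; funext x
    have e : (transl μ * w) x = μ + w x := by
      rw [Equiv.Perm.mul_apply]; simp [transl]
    rw [e]
  -- Claim A : Inv(T) ⊆ Inv(Tw)
  have claimA : RS.invSet (RS.pos C₀) (transl μ) ⊆ RS.invSet (RS.pos C₀) (transl μ * w) := by
    rintro g ⟨hgpos, hgneg⟩
    rw [htr g] at hgneg
    obtain ⟨β, hβ, m, rfl, hcond⟩ := hgpos
    obtain ⟨k, hk⟩ := hint β hβ
    have hm0 : (0 : ℝ) ≤ (m : ℝ) := by
      rcases hcond with h | ⟨rfl, -⟩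
      · exact_mod_cast h.le
      · simp
    have hTEq : (fun x => aev β m (μ + x)) = aev β (m + k) := by
      funext x
      show β (μ + x) + (m : ℝ) = β x + ((m + k : ℤ) : ℝ)
      rw [map_add, hk]; push_cast; ring
    rw [hTEq] at hgneg
    have hcrit := RS.pos_iff_pt hC₀ hβ ha (m + k)
    have hval : β a + ((m + k : ℤ) : ℝ) < 0 := by
      rcases lt_trichotomy (β a + ((m + k : ℤ) : ℝ)) 0 with h | h | h
      · exact h
      · exact absurd h hcrit.2
      · exact absurd ((RS.isPosAff_iff_pt hC₀ hβ ha (m + k)).mpr h) hgneg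
    push_cast at hval
    have hβμa : β (μ + a) < 0 := by
      rw [map_add, hk]; linarith
    have hβwa : β (w a) < 0 := RS.neg_on_chamber hC hβ hμa hβμa (w a) hwa
    have hba : -1 < β a := by
      rcases RS.alcove_root_cases hC₀ hβ ha with ⟨-, h0, -⟩ | ⟨-, h0, -⟩ <;> linarith
    have hmkZ : m + k ≤ 0 := by
      have h1 : ((m + k : ℤ) : ℝ) < 1 := by push_cast; linarith
      have h2 : (m + k : ℤ) < 1 := by exact_mod_cast h1
      omega
    have hmkR : (m : ℝ) + (k : ℝ) ≤ 0 := by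
      have : ((m + k : ℤ) : ℝ) ≤ 0 := by exact_mod_cast hmkZ
      push_cast at this; linarith
    refine ⟨⟨β, hβ, m, rfl, hcond⟩, ?_⟩
    rw [hTw]
    apply RS.not_isPosAff_of_neg_pt hC₀ ha
    show β (μ + w a) + (m : ℝ) < 0
    rw [map_add, hk]
    linarith
  -- Splitting of Inv(Tw)
  have hsplit : RS.invSet (RS.pos C₀) (transl μ * w) =
      RS.invSet (RS.pos C₀) (transl μ) ∪
        {g : V → ℝ | RS.IsPosAff (RS.pos C₀) g ∧
          RS.IsPosAff (RS.pos C₀) (fun x => g (μ + x)) ∧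
          ¬ RS.IsPosAff (RS.pos C₀) (fun x => g (μ + w x))} := by
    ext g
    constructor
    · rintro ⟨hgpos, hgneg⟩
      rw [hTw g] at hgneg
      obtain ⟨β, hβ, m, hgEq, hcond⟩ := hgpos
      subst hgEq
      obtain ⟨k, hk⟩ := hint β hβ
      have hTEq : (fun x => aev β m (μ + x)) = aev β (m + k) := by
        funext x
        show β (μ + x) + (m : ℝ) = β x + ((m + k : ℤ) : ℝ)
        rw [map_add, hk]; push_cast; ring
      by_cases hp : RS.IsPosAff (RS.pos C₀) (aev β (m + k))
      · right
        exact ⟨⟨β, hβ, m, rfl, hcond⟩, by rw [hTEq]; exact hp, hgneg⟩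
      · left
        refine ⟨⟨β, hβ, m, rfl, hcond⟩, ?_⟩
        rw [htr, hTEq]
        exact hp
    · rintro (hg | ⟨h1, h2, h3⟩)
      · exact claimA hg
      · refine ⟨h1, ?_⟩
        rw [hTw]
        exact h3
  -- the bijection with Inv(w)
  have himg : (fun g : V → ℝ => fun x => g (μ + x)) ''
      {g : V → ℝ | RS.IsPosAff (RS.pos C₀) g ∧
        RS.IsPosAff (RS.pos C₀) (fun x => g (μ + x)) ∧
        ¬ RS.IsPosAff (RS.pos C₀) (fun x => g (μ + w x))} =
      RS.invSet (RS.pos C₀) w := by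
    ext f
    constructor
    · rintro ⟨g, ⟨h1, h2, h3⟩, rfl⟩
      exact ⟨h2, h3⟩
    · rintro ⟨hfpos, hfneg⟩
      obtain ⟨β, hβ, m, hfEq, hcond⟩ := hfpos
      subst hfEq
      obtain ⟨k, hk⟩ := hint β hβ
      -- f (w a) < 0 using goodness of w
      obtain ⟨u, hu1, hu2, hu3⟩ := hgoodw
      obtain ⟨j, hj⟩ := hu3 β hβ
      have hwEq : (fun x => aev β m (w x)) = aev (β ∘ₗ u) (m + j) := by
        funext x
        show β (w x) + (m : ℝ) = (β ∘ₗ u) x + ((m + j : ℤ) : ℝ)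
        rw [hu1 x, map_add, hj]
        simp only [LinearMap.comp_apply]
        push_cast; ring
      have hfneg' := hfneg
      rw [hwEq] at hfneg'
      have hcrit := RS.pos_iff_pt hC₀ (hu2 β hβ) ha (m + j)
      have hva : (β ∘ₗ u) a + ((m + j : ℤ) : ℝ) < 0 := by
        rcases lt_trichotomy ((β ∘ₗ u) a + ((m + j : ℤ) : ℝ)) 0 with h | h | h
        · exact h
        · exact absurd h hcrit.2
        · exact absurd ((RS.isPosAff_iff_pt hC₀ (hu2 β hβ) ha (m + j)).mpr h) hfneg'
      have hfwa : β (w a) + (m : ℝ) < 0 := by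
        have hbwa : β (w a) = (β ∘ₗ u) a + (j : ℝ) := by
          rw [hu1 a, map_add, hj]
          simp only [LinearMap.comp_apply]
        rw [Int.cast_add] at hva
        rw [hbwa]
        linarith
      have hm0 : (0 : ℝ) ≤ (m : ℝ) := by
        rcases hcond with h | ⟨rfl, -⟩
        · exact_mod_cast h.le
        · simp
      have hβwa : β (w a) < 0 := by linarith
      have hβμa : β (μ + a) < 0 :=
        RS.neg_on_chamber hC hβ hwa hβwa (μ + a) hμa
      rw [map_add, hk] at hβμa
      have hba : -1 < β a := by
        rcases RS.alcove_root_cases hC₀ hβ ha with ⟨-, h0, -⟩ | ⟨-, h0, -⟩ <;> linarith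
      have hkZ : k ≤ 0 := by
        have h1 : (k : ℝ) < 1 := by linarith
        have h2 : k < 1 := by exact_mod_cast h1
        omega
      have hkR : (k : ℝ) ≤ 0 := by exact_mod_cast hkZ
      have hposval : 0 < β a + (m : ℝ) :=
        ((RS.pos_iff_pt hC₀ hβ ha m).1).mp hcond
      refine ⟨fun x => aev β m (-μ + x), ⟨?_, ?_, ?_⟩, ?_⟩
      · have hgEq : (fun x => aev β m (-μ + x)) = aev β (m - k) := by
          funext x
          show β (-μ + x) + (m : ℝ) = β x + ((m - k : ℤ) : ℝ)
          rw [map_add, map_neg, hk]; push_cast; ring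
        rw [hgEq, RS.isPosAff_iff_pt hC₀ hβ ha (m - k)]
        push_cast
        linarith
      · have e : (fun x => (fun y => aev β m (-μ + y)) (μ + x)) = aev β m := by
          funext x
          show β (-μ + (μ + x)) + (m : ℝ) = β x + (m : ℝ)
          rw [neg_add_cancel_left]
        rw [e]
        exact ⟨β, hβ, m, rfl, hcond⟩
      · have e : (fun x => (fun y => aev β m (-μ + y)) (μ + w x))
            = (fun x => aev β m (w x)) := by
          funext x
          show β (-μ + (μ + w x)) + (m : ℝ) = β (w x) + (m : ℝ)
          rw [neg_add_cancel_left]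
        rw [e]
        exact hfneg
      · funext x
        show β (-μ + (μ + x)) + (m : ℝ) = β x + (m : ℝ)
        rw [neg_add_cancel_left]
  have hinj : Set.InjOn (fun g : V → ℝ => fun x => g (μ + x))
      {g : V → ℝ | RS.IsPosAff (RS.pos C₀) g ∧
        RS.IsPosAff (RS.pos C₀) (fun x => g (μ + x)) ∧
        ¬ RS.IsPosAff (RS.pos C₀) (fun x => g (μ + w x))} := by
    intro g _ g' _ hEq
    funext y
    have h := congrFun hEq (-μ + y)
    simpa [add_neg_cancel_left] using h
  have hS₂fin : ({g : V → ℝ | RS.IsPosAff (RS.pos C₀) g ∧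
      RS.IsPosAff (RS.pos C₀) (fun x => g (μ + x)) ∧
      ¬ RS.IsPosAff (RS.pos C₀) (fun x => g (μ + w x))}).Finite := by
    apply Set.Finite.of_finite_image _ hinj
    rw [himg]
    exact hfinw
  have hdisj : Disjoint (RS.invSet (RS.pos C₀) (transl μ))
      {g : V → ℝ | RS.IsPosAff (RS.pos C₀) g ∧
        RS.IsPosAff (RS.pos C₀) (fun x => g (μ + x)) ∧
        ¬ RS.IsPosAff (RS.pos C₀) (fun x => g (μ + w x))} := by
    rw [Set.disjoint_left]
    rintro g ⟨-, hneg⟩ ⟨-, hpos, -⟩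
    rw [htr g] at hneg
    exact hneg hpos
  calc RS.len C₀ (transl μ * w)
      = (RS.invSet (RS.pos C₀) (transl μ) ∪
          {g : V → ℝ | RS.IsPosAff (RS.pos C₀) g ∧
            RS.IsPosAff (RS.pos C₀) (fun x => g (μ + x)) ∧
            ¬ RS.IsPosAff (RS.pos C₀) (fun x => g (μ + w x))}).ncard := by
        rw [RootSystemData.len, hsplit]
    _ = (RS.invSet (RS.pos C₀) (transl μ)).ncard +
          ({g : V → ℝ | RS.IsPosAff (RS.pos C₀) g ∧
            RS.IsPosAff (RS.pos C₀) (fun x => g (μ + x)) ∧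
            ¬ RS.IsPosAff (RS.pos C₀) (fun x => g (μ + w x))}).ncard :=
        Set.ncard_union_eq hdisj hfinT hS₂fin
    _ = RS.len C₀ (transl μ) + RS.len C₀ w := by
        rw [RootSystemData.len, RootSystemData.len, ← himg,
          Set.ncard_image_of_injOn hinj]
end
end

section
/- For every w, w' ∈ W̃ and every α ∈ Φ, one has w <_α w' if and only if w ∈ W̃_α w' and w(x) <_α w'(x) for all x ∈ A₀ (i.e., w'(x) − w(x) is a positive multiple of α̌ for all x ∈ A₀). Here W̃_α ⊂ W̃ is the subgroup generated by the affine reflections s_{(α,n)}, n ∈ ℤ. -/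
open scoped Classical

noncomputable section

namespace Stmt5Aux

open RootSystemData

variable {V : Type*} [AddCommGroup V] [Module ℝ V]

lemma sAff_apply (RS : RootSystemData V) {α : Module.Dual ℝ V} (hα : α ∈ RS.roots)
    (n : ℤ) (x : V) : RS.sAff α n x = x - (α x + (n : ℝ)) • RS.coroot α := by
  rw [RootSystemData.sAff, dif_pos (RS.root_coroot_two α hα)]
  rfl

lemma sAff_sq (RS : RootSystemData V) {α : Module.Dual ℝ V} (hα : α ∈ RS.roots)
    (n : ℤ) : RS.sAff α n * RS.sAff α n = 1 := by
  ext x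
  have h2 := RS.root_coroot_two α hα
  simp only [Equiv.Perm.mul_apply, sAff_apply RS hα, Equiv.Perm.one_apply,
    map_sub, map_smul, smul_eq_mul, h2]
  match_scalars <;> ring

lemma sAff_inv (RS : RootSystemData V) {α : Module.Dual ℝ V} (hα : α ∈ RS.roots)
    (n : ℤ) : (RS.sAff α n)⁻¹ = RS.sAff α n :=
  inv_eq_of_mul_eq_one_left (sAff_sq RS hα n)

lemma neg_mem_roots (RS : RootSystemData V) {β : Module.Dual ℝ V} (hβ : β ∈ RS.roots) :
    -β ∈ RS.roots := by
  have h := RS.reflect_mem β hβ β hβ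
  rw [RS.root_coroot_two β hβ] at h
  have : β - (2:ℝ) • β = -β := by module
  rwa [this] at h

lemma pos_iff (RS : RootSystemData V) {C₀ : Set V} {v : V} (hreg : RS.IsRegularPt v)
    (hC : C₀ = {x | ∀ α ∈ RS.roots, 0 < α v → 0 < α x}) {β : Module.Dual ℝ V} :
    β ∈ RS.pos C₀ ↔ β ∈ RS.roots ∧ 0 < β v := by
  constructor
  · rintro ⟨hβr, hβp⟩
    exact ⟨hβr, hβp v (by rw [hC]; intro γ hγ h; exact h)⟩
  · rintro ⟨hβr, hβv⟩
    refine ⟨hβr, fun x hx => ?_⟩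
    rw [hC] at hx
    exact hx β hβr hβv

lemma pos_dichotomy (RS : RootSystemData V) {C₀ : Set V} {v : V} (hreg : RS.IsRegularPt v)
    (hC : C₀ = {x | ∀ α ∈ RS.roots, 0 < α v → 0 < α x}) {β : Module.Dual ℝ V}
    (hβ : β ∈ RS.roots) : β ∈ RS.pos C₀ ∨ -β ∈ RS.pos C₀ := by
  rcases lt_trichotomy (β v) 0 with h | h | h
  · right
    exact (pos_iff RS hreg hC).2 ⟨neg_mem_roots RS hβ, by simpa using h⟩
  · exact absurd h (hreg β hβ)
  · left; exact (pos_iff RS hreg hC).2 ⟨hβ, h⟩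

lemma alcove_nonempty (RS : RootSystemData V) {C₀ : Set V} {v : V} (hreg : RS.IsRegularPt v)
    (hC : C₀ = {x | ∀ α ∈ RS.roots, 0 < α v → 0 < α x}) :
    ∃ x₀, x₀ ∈ RS.alcove C₀ := by
  obtain ⟨M, hM⟩ := (RS.finite.image (fun β => β v)).bddAbove
  set M' : ℝ := max M 1 with hM'
  refine ⟨(M' + 1)⁻¹ • v, fun β hβ => ?_⟩
  have hβv : 0 < β v := ((pos_iff RS hreg hC).1 hβ).2
  have hβM : β v ≤ M' := le_trans (hM ⟨β, hβ.1, rfl⟩) (le_max_left _ _)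
  have hM1 : (1:ℝ) ≤ M' := le_max_right _ _
  have hMpos : (0:ℝ) < M' + 1 := by linarith
  constructor
  · rw [map_smul, smul_eq_mul]
    positivity
  · rw [map_smul, smul_eq_mul]
    rw [inv_mul_lt_iff₀ hMpos, mul_one]
    linarith

/-- value positivity of a "positive affine root" on the alcove, and conversely. -/
lemma posAff_val_iff (RS : RootSystemData V) {C₀ : Set V} {v : V} (hreg : RS.IsRegularPt v)
    (hC : C₀ = {x | ∀ α ∈ RS.roots, 0 < α v → 0 < α x})
    {β : Module.Dual ℝ V} (hβ : β ∈ RS.roots) (k : ℤ) {x : V} (hx : x ∈ RS.alcove C₀) :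
    (0 < k ∨ (k = 0 ∧ β ∈ RS.pos C₀)) ↔ 0 < β x + (k : ℝ) := by
  rcases pos_dichotomy RS hreg hC hβ with hp | hp
  · have h1 := hx β hp
    constructor
    · rintro (hk | ⟨rfl, -⟩)
      · have : (1:ℝ) ≤ k := by exact_mod_cast hk
        linarith [h1.1]
      · simpa using h1.1
    · intro h
      rcases lt_trichotomy k 0 with hk | hk | hk
      · have hk' : k ≤ -1 := by omega
        have : (k:ℝ) ≤ -1 := by exact_mod_cast hk'
        linarith [h1.2]
      · exact Or.inr ⟨hk, hp⟩
      · exact Or.inl hk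
  · have h1 := hx (-β) hp
    simp only [LinearMap.neg_apply] at h1
    constructor
    · rintro (hk | ⟨rfl, hpos⟩)
      · have : (1:ℝ) ≤ k := by exact_mod_cast hk
        linarith [h1.2]
      · -- β and -β both positive: contradiction at x
        have h2 := hx β hpos
        linarith [h1.1, h2.1]
    · intro h
      have hk : (0:ℝ) < k := by linarith [h1.1]
      exact Or.inl (by exact_mod_cast hk)

lemma aev_eq_iff {β β' : Module.Dual ℝ V} {k k' : ℤ} (h : aev β k = aev β' k') :
    β = β' ∧ k = k' := by
  have h0 := congrFun h 0
  simp only [aev, map_zero, zero_add] at h0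
  have hk : k = k' := by exact_mod_cast h0
  subst hk
  refine ⟨?_, rfl⟩
  ext x
  have := congrFun h x
  simpa [aev] using this

lemma isPosAff_iff (RS : RootSystemData V) {C₀ : Set V} {v : V} (hreg : RS.IsRegularPt v)
    (hC : C₀ = {x | ∀ α ∈ RS.roots, 0 < α v → 0 < α x})
    {β : Module.Dual ℝ V} (hβ : β ∈ RS.roots) (k : ℤ) {x : V} (hx : x ∈ RS.alcove C₀) :
    RS.IsPosAff (RS.pos C₀) (aev β k) ↔ 0 < β x + (k : ℝ) := by
  constructor
  · rintro ⟨β', hβ', k', heq, hcond⟩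
    obtain ⟨rfl, rfl⟩ := aev_eq_iff heq.symm
    exact (posAff_val_iff RS hreg hC hβ' k' hx).1 hcond
  · intro h
    exact ⟨β, hβ, k, rfl, (posAff_val_iff RS hreg hC hβ k hx).2 h⟩

end Stmt5Aux
namespace Stmt5Aux

variable {V : Type*} [AddCommGroup V] [Module ℝ V]

/-- `α ∘ y` is a root plus an integer constant. -/
def LinInt (RS : RootSystemData V) (y : Equiv.Perm V) : Prop :=
  ∀ α ∈ RS.roots, ∃ β ∈ RS.roots, ∃ m : ℤ, ∀ v, α (y v) = β v + (m : ℝ)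

lemma linInt_gen (RS : RootSystemData V) {γ : Module.Dual ℝ V} (hγ : γ ∈ RS.roots)
    (n : ℤ) : LinInt RS (RS.sAff γ n) := by
  intro α hα
  obtain ⟨c, hc⟩ := RS.crystallographic γ hγ α hα
  refine ⟨α - α (RS.coroot γ) • γ, RS.reflect_mem γ hγ α hα, -(n * c), fun v => ?_⟩
  rw [sAff_apply RS hγ]
  simp only [map_sub, map_smul, smul_eq_mul, LinearMap.sub_apply, LinearMap.smul_apply, hc]
  push_cast
  ring

lemma linInt_mul (RS : RootSystemData V) {x y : Equiv.Perm V}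
    (hx : LinInt RS x) (hy : LinInt RS y) : LinInt RS (x * y) := by
  intro α hα
  obtain ⟨β, hβ, m, hm⟩ := hx α hα
  obtain ⟨δ, hδ, m', hm'⟩ := hy β hβ
  refine ⟨δ, hδ, m' + m, fun v => ?_⟩
  rw [Equiv.Perm.mul_apply, hm, hm']
  push_cast
  ring

lemma affWeyl_linInt (RS : RootSystemData V) {y : Equiv.Perm V} (hy : y ∈ RS.affWeyl) :
    LinInt RS y := by
  have H : LinInt RS y ∧ LinInt RS y⁻¹ := by
    refine Subgroup.closure_induction ?_ ?_ ?_ ?_ hy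
    · rintro g ⟨γ, ⟨hγ, -⟩, n, rfl⟩
      exact ⟨linInt_gen RS hγ n, by rw [sAff_inv RS hγ]; exact linInt_gen RS hγ n⟩
    · constructor <;>
        · intro α hα
          exact ⟨α, hα, 0, fun v => by simp⟩
    · rintro x y hx hy ⟨hx1, hx2⟩ ⟨hy1, hy2⟩
      exact ⟨linInt_mul RS hx1 hy1, by rw [mul_inv_rev]; exact linInt_mul RS hy2 hx2⟩
    · rintro x hx ⟨hx1, hx2⟩
      exact ⟨hx2, by rwa [inv_inv]⟩
  exact H.1

lemma reflSubgroup_classify (RS : RootSystemData V) {α : Module.Dual ℝ V}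
    (hα : α ∈ RS.roots) {u : Equiv.Perm V} (hu : u ∈ RS.reflSubgroup α) :
    (∃ k : ℤ, ∀ v, u v = v + (k : ℝ) • RS.coroot α) ∨ (∃ n : ℤ, u = RS.sAff α n) := by
  have h2 := RS.root_coroot_two α hα
  refine Subgroup.closure_induction ?_ ?_ ?_ ?_ hu
  · rintro g ⟨n, rfl⟩
    exact Or.inr ⟨n, rfl⟩
  · exact Or.inl ⟨0, fun v => by simp⟩
  · rintro x y - - (⟨k, hk⟩ | ⟨n, rfl⟩) (⟨k', hk'⟩ | ⟨m, rfl⟩)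
    · refine Or.inl ⟨k + k', fun v => ?_⟩
      rw [Equiv.Perm.mul_apply, hk', hk]
      push_cast
      module
    · refine Or.inr ⟨m - k, Equiv.ext fun v => ?_⟩
      rw [Equiv.Perm.mul_apply, sAff_apply RS hα, hk, sAff_apply RS hα]
      push_cast
      module
    · refine Or.inr ⟨n + k', Equiv.ext fun v => ?_⟩
      rw [Equiv.Perm.mul_apply, hk', sAff_apply RS hα, sAff_apply RS hα]
      simp only [map_add, map_smul, smul_eq_mul, h2]
      push_cast
      module
    · refine Or.inl ⟨m - n, fun v => ?_⟩
      rw [Equiv.Perm.mul_apply, sAff_apply RS hα, sAff_apply RS hα]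
      simp only [map_sub, map_add, map_smul, smul_eq_mul, h2]
      push_cast
      module
  · rintro x - (⟨k, hk⟩ | ⟨n, rfl⟩)
    · refine Or.inl ⟨-k, fun v => ?_⟩
      apply x.injective
      rw [show x (x⁻¹ v) = v from x.apply_symm_apply v, hk]
      push_cast
      module
    · exact Or.inr ⟨n, sAff_inv RS hα n⟩

end Stmt5Aux
namespace Stmt5Aux

variable {V : Type*} [AddCommGroup V] [Module ℝ V]

lemma step_unpack (RS : RootSystemData V) {C₀ : Set V} {v : V} (hreg : RS.IsRegularPt v)
    (hC : C₀ = {x | ∀ α ∈ RS.roots, 0 < α v → 0 < α x}) {α : Module.Dual ℝ V}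
    {x y : Equiv.Perm V} (hstep : RS.stepRel (RS.pos C₀) {α} x y) :
    ∃ n : ℤ, x = RS.sAff α n * y ∧ ∀ z ∈ RS.alcove C₀, 0 < α (y z) + (n : ℝ) := by
  obtain ⟨α', ⟨hα'r, hα'm⟩, n, hx, hpos⟩ := hstep
  rcases hα'm with rfl
  obtain ⟨β', hβ', k, heq, hcond⟩ := hpos
  refine ⟨n, hx, fun z hz => ?_⟩
  have h1 : 0 < β' z + (k : ℝ) := (posAff_val_iff RS hreg hC hβ' k hz).1 hcond
  have h2 := congrFun heq z
  simp only [aev] at h2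
  linarith [h2 ▸ h1]

lemma mk_step (RS : RootSystemData V) {C₀ : Set V} {v : V} (hreg : RS.IsRegularPt v)
    (hC : C₀ = {x | ∀ α ∈ RS.roots, 0 < α v → 0 < α x}) {α : Module.Dual ℝ V}
    (hα : α ∈ RS.roots) {β : Module.Dual ℝ V} (hβ : β ∈ RS.roots) (y : Equiv.Perm V)
    (q n : ℤ) (hy : ∀ u, α (y u) = β u + (q : ℝ)) {x₀ : V} (hx₀ : x₀ ∈ RS.alcove C₀)
    (hpos : 0 < β x₀ + (q : ℝ) + (n : ℝ)) :
    RS.stepRel (RS.pos C₀) {α} (RS.sAff α n * y) y := by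
  refine ⟨α, ⟨hα, rfl⟩, n, rfl, ?_⟩
  have heq : (fun u => aev α n (y u)) = aev β (q + n) := by
    funext u
    simp only [aev, hy u]
    push_cast
    ring
  rw [heq]
  exact (isPosAff_iff RS hreg hC hβ (q + n) hx₀).2 (by push_cast; linarith)

lemma two_step (RS : RootSystemData V) {C₀ : Set V} {v : V} (hreg : RS.IsRegularPt v)
    (hC : C₀ = {x | ∀ α ∈ RS.roots, 0 < α v → 0 < α x}) {α : Module.Dual ℝ V}
    (hα : α ∈ RS.roots) {β : Module.Dual ℝ V} (hβ : β ∈ RS.roots) (y : Equiv.Perm V)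
    (q : ℤ) (hy : ∀ u, α (y u) = β u + (q : ℝ)) {x₀ : V} (hx₀ : x₀ ∈ RS.alcove C₀)
    (hn : ∃ n : ℤ, 0 < β x₀ + (q : ℝ) + (n : ℝ) ∧ β x₀ + (q : ℝ) + (n : ℝ) < 1) :
    ∃ y' : Equiv.Perm V, Relation.TransGen (RS.stepRel (RS.pos C₀) {α}) y' y ∧
      (∀ u, y' u = y u - RS.coroot α) ∧
      (∀ u, α (y' u) = β u + ((q - 2 : ℤ) : ℝ)) := by
  obtain ⟨n, hn1, hn2⟩ := hn
  have h2 := RS.root_coroot_two α hα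
  set y₁ := RS.sAff α n * y with hy₁def
  have e1 : ∀ u, y₁ u = y u - (α (y u) + (n : ℝ)) • RS.coroot α := fun u => by
    rw [hy₁def, Equiv.Perm.mul_apply, sAff_apply RS hα]
  have hy1 : ∀ u, α (y₁ u) = (-β) u + ((-q - 2 * n : ℤ) : ℝ) := fun u => by
    rw [e1, map_sub, map_smul, smul_eq_mul, h2, hy u]
    simp only [LinearMap.neg_apply]
    push_cast
    ring
  have step1 : RS.stepRel (RS.pos C₀) {α} y₁ y :=
    mk_step RS hreg hC hα hβ y q n hy hx₀ hn1
  have step2 : RS.stepRel (RS.pos C₀) {α} (RS.sAff α (n + 1) * y₁) y₁ := by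
    refine mk_step RS hreg hC hα (neg_mem_roots RS hβ) y₁ (-q - 2 * n) (n + 1) hy1 hx₀ ?_
    simp only [LinearMap.neg_apply]
    push_cast
    linarith
  refine ⟨RS.sAff α (n + 1) * y₁, Relation.TransGen.head step2
    (Relation.TransGen.single step1), fun u => ?_, fun u => ?_⟩
  · rw [Equiv.Perm.mul_apply, sAff_apply RS hα, hy1 u, e1, hy u]
    simp only [LinearMap.neg_apply]
    push_cast
    module
  · rw [Equiv.Perm.mul_apply, sAff_apply RS hα, map_sub, map_smul, smul_eq_mul, h2,
      hy1 u]
    simp only [LinearMap.neg_apply]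
    push_cast
    ring

lemma translate_chain (RS : RootSystemData V) {C₀ : Set V} {v : V} (hreg : RS.IsRegularPt v)
    (hC : C₀ = {x | ∀ α ∈ RS.roots, 0 < α v → 0 < α x}) {α : Module.Dual ℝ V}
    (hα : α ∈ RS.roots) {β : Module.Dual ℝ V} (hβ : β ∈ RS.roots) (w' : Equiv.Perm V)
    (m : ℤ) (hw' : ∀ u, α (w' u) = β u + (m : ℝ)) {x₀ : V} (hx₀ : x₀ ∈ RS.alcove C₀)
    (K : ℕ) :
    ∃ y' : Equiv.Perm V, Relation.TransGen (RS.stepRel (RS.pos C₀) {α}) y' w' ∧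
      (∀ u, y' u = w' u + ((-(K + 1) : ℤ) : ℝ) • RS.coroot α) ∧
      (∀ u, α (y' u) = β u + ((m - 2 * (K + 1) : ℤ) : ℝ)) := by
  have hfr : ∀ q : ℤ, ∃ n : ℤ, 0 < β x₀ + (q : ℝ) + (n : ℝ) ∧
      β x₀ + (q : ℝ) + (n : ℝ) < 1 := by
    intro q
    rcases pos_dichotomy RS hreg hC hβ with hp | hp
    · obtain ⟨hb1, hb2⟩ := hx₀ β hp
      exact ⟨-q, by constructor <;> push_cast <;> linarith⟩
    · obtain ⟨hb1, hb2⟩ := hx₀ (-β) hp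
      simp only [LinearMap.neg_apply] at hb1 hb2
      exact ⟨1 - q, by constructor <;> push_cast <;> linarith⟩
  induction K with
  | zero =>
    obtain ⟨y', hchain, he, hβe⟩ := two_step RS hreg hC hα hβ w' m hw' hx₀ (hfr m)
    refine ⟨y', hchain, fun u => ?_, fun u => ?_⟩
    · rw [he u]; push_cast; module
    · rw [hβe u]; push_cast; ring_nf
  | succ K IH =>
    obtain ⟨y', hchain, he, hβe⟩ := IH
    obtain ⟨y'', hchain2, he2, hβe2⟩ :=
      two_step RS hreg hC hα hβ y' (m - 2 * (K + 1)) (fun u => hβe u) hx₀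
        (hfr (m - 2 * (K + 1)))
    refine ⟨y'', hchain2.trans hchain, fun u => ?_, fun u => ?_⟩
    · rw [he2 u, he u]; push_cast; module
    · rw [hβe2 u]; push_cast; ring_nf

end Stmt5Aux

/-- Corollary 1.8(a): for `w, w' ∈ W̃` and `α ∈ Φ`, one has `w <_α w'`
iff `w ∈ W̃_α w'` and `w'(x) − w(x)` is a positive multiple of `α̌` for all `x ∈ A₀`. -/

theorem stmt5 {V : Type*} [AddCommGroup V] [Module ℝ V] [FiniteDimensional ℝ V]
    (RS : RootSystemData V) (C₀ : Set V) (hC₀ : RS.IsChamber C₀)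
    (α : Module.Dual ℝ V) (hα : α ∈ RS.roots)
    (w w' : Equiv.Perm V) (hwW : w ∈ RS.affWeyl) (hw'W : w' ∈ RS.affWeyl) :
    RS.ordLT (RS.pos C₀) {α} w w' ↔
      ((∃ u ∈ RS.reflSubgroup α, w = u * w') ∧
        ∀ x ∈ RS.alcove C₀, ∃ c : ℝ, 0 < c ∧ w' x - w x = c • RS.coroot α) := by
  obtain ⟨v, hreg, hC⟩ := hC₀
  obtain ⟨x₀, hx₀⟩ := Stmt5Aux.alcove_nonempty RS hreg hC
  have h2 := RS.root_coroot_two α hα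
  constructor
  · intro h
    clear hwW
    induction h using Relation.TransGen.head_induction_on with
    | single hstep =>
      obtain ⟨n, rfl, hval⟩ := Stmt5Aux.step_unpack RS hreg hC hstep
      refine ⟨⟨RS.sAff α n, Subgroup.subset_closure ⟨n, rfl⟩, rfl⟩, fun x hx => ?_⟩
      refine ⟨α (w' x) + n, hval x hx, ?_⟩
      rw [Equiv.Perm.mul_apply, Stmt5Aux.sAff_apply RS hα]
      module
    | @head a z hstep hchain IH =>
      obtain ⟨⟨u, hu, hz⟩, hvec⟩ := IH
      obtain ⟨n, rfl, hval⟩ := Stmt5Aux.step_unpack RS hreg hC hstep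
      refine ⟨⟨RS.sAff α n * u, mul_mem (Subgroup.subset_closure ⟨n, rfl⟩) hu,
        by rw [hz, mul_assoc]⟩, fun x hx => ?_⟩
      obtain ⟨c₁, hc₁, he₁⟩ := hvec x hx
      refine ⟨c₁ + (α (z x) + n), add_pos hc₁ (hval x hx), ?_⟩
      rw [Equiv.Perm.mul_apply, Stmt5Aux.sAff_apply RS hα,
        sub_eq_iff_eq_add.mp he₁]
      module
  · rintro ⟨⟨u, hu, rfl⟩, hvec⟩
    obtain ⟨c, hc, hce⟩ := hvec x₀ hx₀
    obtain ⟨β, hβ, m, hβm⟩ := Stmt5Aux.affWeyl_linInt RS hw'W α hα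
    rcases Stmt5Aux.reflSubgroup_classify RS hα hu with ⟨k, hk⟩ | ⟨n, rfl⟩
    · -- u is a translation by k • α̌
      rw [Equiv.Perm.mul_apply, hk] at hce
      have hca := congrArg α hce
      simp only [map_sub, map_add, map_smul, smul_eq_mul, h2] at hca
      have hkc : (k : ℝ) = -c := by linarith
      have hkneg : k < 0 := by
        have : (k : ℝ) < 0 := by linarith
        exact_mod_cast this
      set K : ℕ := (-k - 1).toNat with hK
      have hkZ : k = (-(K + 1) : ℤ) := by omega
      obtain ⟨y', hchain, he, -⟩ :=
        Stmt5Aux.translate_chain RS hreg hC hα hβ w' m hβm hx₀ K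
      have huw : u * w' = y' := by
        apply Equiv.ext
        intro z
        rw [Equiv.Perm.mul_apply, hk, he, hkZ]
      rw [huw]
      exact hchain
    · -- u is the reflection sAff α n
      rw [Equiv.Perm.mul_apply, Stmt5Aux.sAff_apply RS hα] at hce
      have hca := congrArg α hce
      simp only [map_sub, map_add, map_smul, smul_eq_mul, h2] at hca
      refine Relation.TransGen.single
        (Stmt5Aux.mk_step RS hreg hC hα hβ w' m n hβm hx₀ ?_)
      have hx := hβm x₀
      linarith
end
end
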